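/- arXiv:1109.0312 — 2 statements merged into one kernel-verified Lean document; each statement's English description precedes it below -/
import Mathlib

section
/- If two d-dimensional points p and q with natural number coordinates satisfy σ(p) ≤ σ(q) in the shuffle order, then for every coordinate k, the most significant bit position at which p_k and q_k differ is at most the maximum over all coordinates j of the most significant bit position at which p_j and q_j differ; moreover, at the coordinate achieving this maximum (ties broken appropriately), p is at most q. -/
/-- The shuffle (bit interleaving) of a point of `ℕ^d` with `w`-bit coordinates. -/
def natShuffle (d w : ℕ) (p : Fin d → ℕ) : ℕ :=
  ∑ j ∈ Finset.range w, ∑ k : Fin d,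
    if (p k).testBit j then 2 ^ (j * d + (d - 1 - k.val)) else 0

/-- The index achieving the maximum most-significant-differing-bit position,
with ties broken by the left-to-right scan (`Nat.size a = ⌊log₂ a⌋ + 1`). -/
def zIdx (d : ℕ) [NeZero d] (p q : Fin d → ℕ) : Fin d :=
  (List.finRange d).foldl
    (fun i j => if Nat.size (p i ^^^ q i) < Nat.size (p j ^^^ q j) then j else i)
    ⟨0, NeZero.pos d⟩

lemma sum_range_two_pow (m : ℕ) : ∑ r ∈ Finset.range m, 2^r = 2^m - 1 := by
  induction m with
  | zero => simp
  | succ n ih => rw [Finset.sum_range_succ, ih]; have := Nat.one_le_two_pow (n := n); ring_nf; omega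

lemma sum_range_bits_lt (m : ℕ) (g : ℕ → Bool) :
    (∑ r ∈ Finset.range m, if g r then 2^r else 0) < 2^m := by
  have h1 : (∑ r ∈ Finset.range m, if g r then 2^r else 0) ≤
      ∑ r ∈ Finset.range m, 2^r := by
    apply Finset.sum_le_sum; intro i _; split <;> simp
  have h2 := sum_range_two_pow m
  have := Nat.one_le_two_pow (n := m)
  omega

lemma testBit_sum_range_bits (m : ℕ) (g : ℕ → Bool) (n : ℕ) :
    (∑ r ∈ Finset.range m, if g r then 2^r else 0).testBit n = (decide (n < m) && g n) := by
  induction m with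
  | zero => simp
  | succ m ih =>
    rw [Finset.sum_range_succ]
    have hb := sum_range_bits_lt m g
    have hrw : (∑ r ∈ Finset.range m, if g r then 2^r else 0) + (if g m then 2^m else 0)
        = 2^m * (if g m then 1 else 0) + (∑ r ∈ Finset.range m, if g r then 2^r else 0) := by
      split <;> ring
    rw [hrw, Nat.testBit_two_pow_mul_add _ hb n]
    rcases lt_trichotomy n m with hn | hn | hn
    · simp [hn, Nat.lt_succ_of_lt hn, ih]
    · subst hn
      simp only [lt_irrefl, if_false, Nat.sub_self]
      rcases Bool.eq_false_or_eq_true (g n) with hg | hg <;> simp [hg]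
    · have h1 : ¬ (n < m) := by omega
      have h2 : ¬ (n < m + 1) := by omega
      have h3 : (1 : ℕ) < 2 ^ (n - m) := by
        have : 0 < n - m := by omega
        exact Nat.one_lt_two_pow_iff.2 (by omega)
      simp only [h1, if_false, decide_eq_false h2, Bool.false_and]
      rcases Bool.eq_false_or_eq_true (g m) with hg | hg <;>
        simp [hg, Nat.testBit_eq_false_of_lt h3]

def shBlock (d j : ℕ) (p : Fin d → ℕ) : ℕ :=
  ∑ k : Fin d, if (p k).testBit j then 2 ^ (d - 1 - k.val) else 0

lemma shBlock_eq (d j : ℕ) (hd : 0 < d) (p : Fin d → ℕ) :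
    shBlock d j p = ∑ r ∈ Finset.range d,
      if (if h : d - 1 - r < d then (p ⟨d - 1 - r, h⟩).testBit j else false)
        then 2^r else 0 := by
  classical
  set f : ℕ → ℕ := fun i =>
    if h : i < d then (if (p ⟨i, h⟩).testBit j then 2 ^ (d - 1 - i) else 0) else 0 with hf
  have h1 : shBlock d j p = ∑ i ∈ Finset.range d, f i := by
    rw [← Fin.sum_univ_eq_sum_range]
    apply Finset.sum_congr rfl
    intro k _
    simp [hf, k.isLt]
  rw [h1]
  rw [← Finset.sum_range_reflect (fun r =>
    if (if h : d - 1 - r < d then (p ⟨d - 1 - r, h⟩).testBit j else false)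
      then 2^r else 0) d]
  apply Finset.sum_congr rfl
  intro i hi
  rw [Finset.mem_range] at hi
  have h2 : d - 1 - (d - 1 - i) = i := by omega
  have h3 : d - 1 - (d - 1 - i) < d := by omega
  simp only [h2, hf]
  rw [dif_pos hi, dif_pos hi]

lemma shBlock_lt (d j : ℕ) (hd : 0 < d) (p : Fin d → ℕ) : shBlock d j p < 2^d := by
  rw [shBlock_eq d j hd p]; exact sum_range_bits_lt d _

lemma testBit_shBlock (d j : ℕ) (hd : 0 < d) (p : Fin d → ℕ) (r : ℕ) :
    (shBlock d j p).testBit r =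
      (decide (r < d) && (if h : d - 1 - r < d then (p ⟨d - 1 - r, h⟩).testBit j else false)) := by
  rw [shBlock_eq d j hd p, testBit_sum_range_bits]

lemma natShuffle_succ (d w : ℕ) (p : Fin d → ℕ) :
    natShuffle d (w+1) p = 2^(w*d) * shBlock d w p + natShuffle d w p := by
  rw [natShuffle, Finset.sum_range_succ, shBlock, Finset.mul_sum, add_comm]
  congr 1
  apply Finset.sum_congr rfl
  intro k _
  rw [mul_ite, mul_zero, ← pow_add]

lemma natShuffle_lt (d w : ℕ) (hd : 0 < d) (p : Fin d → ℕ) :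
    natShuffle d w p < 2^(w*d) := by
  induction w with
  | zero => simp [natShuffle]
  | succ w ih =>
    rw [natShuffle_succ]
    have hB := shBlock_lt d w hd p
    calc 2^(w*d) * shBlock d w p + natShuffle d w p
        < 2^(w*d) * shBlock d w p + 2^(w*d) := by omega
      _ = 2^(w*d) * (shBlock d w p + 1) := by ring
      _ ≤ 2^(w*d) * 2^d := Nat.mul_le_mul_left _ (by omega)
      _ = 2^((w+1)*d) := by rw [← pow_add]; ring_nf

lemma natShuffle_testBit (d w : ℕ) (hd : 0 < d) (p : Fin d → ℕ) (n : ℕ) :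
    (natShuffle d w p).testBit n =
      (decide (n < w*d) &&
        (if h : d - 1 - n % d < d then (p ⟨d - 1 - n % d, h⟩).testBit (n / d) else false)) := by
  induction w with
  | zero => simp [natShuffle]
  | succ w ih =>
    rw [natShuffle_succ, Nat.testBit_two_pow_mul_add _ (natShuffle_lt d w hd p) n]
    by_cases hn : n < w * d
    · rw [if_pos hn, ih, decide_eq_true hn, decide_eq_true (show n < (w+1)*d by nlinarith)]
    · rw [if_neg hn]
      rw [testBit_shBlock d w hd p]
      set r := n - w * d with hr
      have hn' : n = r + w * d := by omega
      by_cases hrd : r < d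
      · have hdiv : n / d = w := by rw [hn', Nat.add_mul_div_right _ _ hd, Nat.div_eq_of_lt hrd]; omega
        have hmod : n % d = r := by rw [hn', Nat.add_mul_mod_self_right, Nat.mod_eq_of_lt hrd]
        have hlt : n < (w+1)*d := by rw [hn']; nlinarith
        rw [hdiv, hmod, decide_eq_true hrd, decide_eq_true hlt]
      · have hge : ¬ (n < (w+1)*d) := by rw [hn']; intro hc; apply hrd; nlinarith
        rw [decide_eq_false hrd, decide_eq_false hge, Bool.false_and, Bool.false_and]

lemma natShuffle_testBit' (d w : ℕ) (hd : 0 < d) (p : Fin d → ℕ) (j : ℕ) (k : Fin d) :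
    (natShuffle d w p).testBit (j*d + (d - 1 - k.val)) =
      (decide (j < w) && (p k).testBit j) := by
  rw [natShuffle_testBit d w hd p]
  have hk := k.isLt
  have he : d - 1 - k.val < d := by omega
  have hdiv : (j*d + (d - 1 - k.val)) / d = j := by
    rw [add_comm, Nat.add_mul_div_right _ _ hd, Nat.div_eq_of_lt he]; omega
  have hmod : (j*d + (d - 1 - k.val)) % d = d - 1 - k.val := by
    rw [add_comm, Nat.add_mul_mod_self_right, Nat.mod_eq_of_lt he]
  have hidx : d - 1 - (d - 1 - k.val) = k.val := by omega
  have hiff : (j*d + (d - 1 - k.val) < w*d) ↔ j < w := by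
    constructor
    · intro hlt
      by_contra hc
      push_neg at hc
      have : w * d ≤ j * d := Nat.mul_le_mul_right d hc
      omega
    · intro hlt
      have : (j+1) * d ≤ w * d := Nat.mul_le_mul_right d hlt
      nlinarith
  rw [hdiv, hmod, dif_pos (show d - 1 - (d-1-k.val) < d by omega)]
  have : (⟨d - 1 - (d-1-k.val), by omega⟩ : Fin d) = k := Fin.ext hidx
  rw [this, decide_eq_decide.2 hiff]

lemma testBit_size_sub_one {x : ℕ} (hx : x ≠ 0) : x.testBit (x.size - 1) = true := by
  have h0 : 0 < x.size := Nat.size_pos.2 (Nat.pos_of_ne_zero hx)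
  have h1 : 2^(x.size - 1) ≤ x := Nat.lt_size.1 (by omega)
  have h2 : x < 2^x.size := Nat.lt_size_self x
  have hpow : (2:ℕ)^x.size = 2^(x.size-1)*2 := by
    rw [← pow_succ]; congr 1; omega
  have hpos : 0 < (2:ℕ)^(x.size-1) := Nat.pow_pos (by norm_num)
  have h3 : x / 2^(x.size-1) = 1 := by
    have hlo : 1 ≤ x / 2^(x.size-1) := (Nat.one_le_div_iff hpos).2 h1
    have hhi : x / 2^(x.size-1) < 2 := (Nat.div_lt_iff_lt_mul hpos).2 (by omega)
    omega
  rw [Nat.testBit_eq_decide_div_mod_eq, h3]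
  norm_num

lemma foldl_keep {d : ℕ} (s : Fin d → ℕ) :
    ∀ (l : List (Fin d)) (i : Fin d), (∀ j ∈ l, s j ≤ s i) →
      l.foldl (fun i j => if s i < s j then j else i) i = i := by
  intro l
  induction l with
  | nil => simp
  | cons a l ih =>
    intro i h
    have ha : s a ≤ s i := h a (List.mem_cons_self)
    simp only [List.foldl_cons]
    rw [if_neg (by omega)]
    exact ih i (fun j hj => h j (List.mem_cons_of_mem _ hj))

lemma foldl_lt {d : ℕ} (s : Fin d → ℕ) (c : ℕ) :
    ∀ (l : List (Fin d)) (i : Fin d), s i < c → (∀ j ∈ l, s j < c) →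
      s (l.foldl (fun i j => if s i < s j then j else i) i) < c := by
  intro l
  induction l with
  | nil => intro i h _; simpa using h
  | cons a l ih =>
    intro i hi h
    have ha : s a < c := h a (List.mem_cons_self)
    simp only [List.foldl_cons]
    exact ih _ (by split <;> assumption) (fun j hj => h j (List.mem_cons_of_mem _ hj))

lemma zIdx_spec (d : ℕ) [NeZero d] (s : Fin d → ℕ) (k0 : Fin d)
    (h1 : ∀ k, s k ≤ s k0) (h2 : ∀ k : Fin d, k.val < k0.val → s k < s k0) :
    (List.finRange d).foldl (fun i j => if s i < s j then j else i) ⟨0, NeZero.pos d⟩ = k0 := by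
  have hlen : k0.val < (List.finRange d).length := by simpa using k0.isLt
  have hget : (List.finRange d)[k0.val] = k0 := by
    simp [List.getElem_finRange]
  have hdrop : (List.finRange d).drop k0.val
      = k0 :: (List.finRange d).drop (k0.val + 1) := by
    rw [List.drop_eq_getElem_cons hlen, hget]
  rcases Nat.eq_zero_or_pos k0.val with h0 | h0
  · have hinit : (⟨0, NeZero.pos d⟩ : Fin d) = k0 := Fin.ext (by simpa using h0.symm)
    rw [hinit]
    exact foldl_keep s _ k0 (fun j _ => h1 j)
  · have hsplit : List.finRange d
        = (List.finRange d).take k0.val ++ (List.finRange d).drop k0.val :=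
      (List.take_append_drop _ _).symm
    rw [hsplit, List.foldl_append, hdrop]
    have htake : ∀ j ∈ (List.finRange d).take k0.val, s j < s k0 := by
      intro j hj
      obtain ⟨m, hm, rfl⟩ := List.getElem_of_mem hj
      have hm' : m < k0.val := by
        have := hm
        simp [List.length_take] at this
        omega
      rw [List.getElem_take]
      apply h2
      simp [List.getElem_finRange]
      omega
    have hacc : s ((List.finRange d).take k0.val |>.foldl
        (fun i j => if s i < s j then j else i) ⟨0, NeZero.pos d⟩) < s k0 :=
      foldl_lt s (s k0) _ _ (h2 _ (by simpa using h0)) htake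
    simp only [List.foldl_cons]
    rw [if_pos hacc]
    exact foldl_keep s _ k0 (fun j _ => h1 j)

/-- If `σ(p) ≤ σ(q)`, then every coordinate's most significant differing bit position
is at most the maximum over all coordinates, and at the coordinate achieving the
maximum (ties broken by the scan), `p` is at most `q`. -/
theorem stmt4 (d w : ℕ) [NeZero d] (p q : Fin d → ℕ)
    (hp : ∀ k, p k < 2 ^ w) (hq : ∀ k, q k < 2 ^ w)
    (h : natShuffle d w p ≤ natShuffle d w q) :
    (∀ k, Nat.size (p k ^^^ q k) ≤
        Finset.univ.sup (fun j : Fin d => Nat.size (p j ^^^ q j))) ∧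
      p (zIdx d p q) ≤ q (zIdx d p q) := by
  have hd : 0 < d := NeZero.pos d
  refine ⟨fun k => Finset.le_sup (f := fun j : Fin d => Nat.size (p j ^^^ q j))
    (Finset.mem_univ k), ?_⟩
  by_cases hpq : ∀ k, p k = q k
  · exact (hpq _).le
  push_neg at hpq
  obtain ⟨k1, hk1⟩ := hpq
  set m := natShuffle d w p with hm
  set m' := natShuffle d w q with hm'
  -- bits of coords above w agree
  have hbit_ge : ∀ (k : Fin d) (j : ℕ), w ≤ j → (p k).testBit j = (q k).testBit j := by
    intro k j hj
    have h2 : (2:ℕ)^w ≤ 2^j := Nat.pow_le_pow_right (by norm_num) hj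
    rw [Nat.testBit_eq_false_of_lt (lt_of_lt_of_le (hp k) h2),
        Nat.testBit_eq_false_of_lt (lt_of_lt_of_le (hq k) h2)]
  -- differing coordinate bits happen below w, and give a differing shuffle bit
  have hdiffbit : ∀ (k : Fin d) (j : ℕ), (p k ^^^ q k).testBit j = true →
      j < w ∧ m.testBit (j*d + (d-1-k.val)) ≠ m'.testBit (j*d + (d-1-k.val)) := by
    intro k j hbit
    have hjw : j < w := by
      by_contra hc
      push_neg at hc
      rw [Nat.testBit_xor, hbit_ge k j hc] at hbit
      simp at hbit
    have hne : (p k).testBit j ≠ (q k).testBit j := by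
      rw [Nat.testBit_xor] at hbit
      intro hc
      rw [hc] at hbit
      simp at hbit
    refine ⟨hjw, ?_⟩
    rw [hm, hm', natShuffle_testBit' d w hd p j k, natShuffle_testBit' d w hd q j k,
        decide_eq_true hjw, Bool.true_and, Bool.true_and]
    exact hne
  -- m ≠ m'
  have hmne : m ≠ m' := by
    have hx1 : p k1 ^^^ q k1 ≠ 0 := by
      simp only [ne_eq, xor_eq_zero_iff]
      exact hk1
    have htop := testBit_size_sub_one hx1
    obtain ⟨_, hne⟩ := hdiffbit k1 _ htop
    intro hc
    rw [hc] at hne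
    exact hne rfl
  have hmlt : m < m' := lt_of_le_of_ne h hmne
  have hx : m ^^^ m' ≠ 0 := by
    simp only [ne_eq, xor_eq_zero_iff]
    exact hmne
  obtain ⟨N, hNdef⟩ : ∃ N, (m ^^^ m').size = N + 1 := by
    have := Nat.size_pos.2 (Nat.pos_of_ne_zero hx)
    exact ⟨(m ^^^ m').size - 1, by omega⟩
  have hNtop : (m ^^^ m').testBit N = true := by
    have := testBit_size_sub_one hx
    rwa [hNdef, Nat.add_sub_cancel] at this
  have hNd : ∀ n, N < n → m.testBit n = m'.testBit n := by
    intro n hn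
    have hsz : (m ^^^ m').size ≤ n := by omega
    have hlt : m ^^^ m' < 2^n :=
      lt_of_lt_of_le (Nat.lt_size_self _) (Nat.pow_le_pow_right (by norm_num) hsz)
    have := Nat.testBit_eq_false_of_lt hlt (i := n)
    rw [Nat.testBit_xor] at this
    rcases Bool.eq_false_or_eq_true (m.testBit n) with h1 | h1 <;>
      rcases Bool.eq_false_or_eq_true (m'.testBit n) with h2 | h2 <;>
      simp [h1, h2] at this ⊢
  have hNne : m.testBit N ≠ m'.testBit N := by
    rw [Nat.testBit_xor] at hNtop
    intro hc
    rw [hc] at hNtop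
    simp at hNtop
  have hmN : m.testBit N = false ∧ m'.testBit N = true := by
    cases h1 : m.testBit N with
    | false =>
      cases h2 : m'.testBit N with
      | false => rw [h1, h2] at hNne; exact absurd rfl hNne
      | true => exact ⟨rfl, rfl⟩
    | true =>
      exfalso
      cases h2 : m'.testBit N with
      | false =>
        have : m' < m := Nat.lt_of_testBit N h2 h1 (fun j hj => (hNd j hj).symm)
        omega
      | true =>
        rw [h1, h2] at hNne
        exact hNne rfl
  -- N < w*d
  have hNwd : N < w * d := by
    by_contra hc
    push_neg at hc
    apply hNne
    rw [hm, hm', natShuffle_testBit d w hd p, natShuffle_testBit d w hd q,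
        decide_eq_false (show ¬ N < w*d by omega), Bool.false_and, Bool.false_and]
  obtain ⟨j0, r0, hr0d, hNeq'⟩ : ∃ j0 r0, r0 < d ∧ N = j0 * d + r0 :=
    ⟨N / d, N % d, Nat.mod_lt _ hd, by rw [Nat.mul_comm]; exact (Nat.div_add_mod N d).symm⟩
  obtain ⟨k0, hk0v⟩ : ∃ k0 : Fin d, k0.val = d - 1 - r0 := ⟨⟨d - 1 - r0, by omega⟩, rfl⟩
  have hk0val : d - 1 - k0.val = r0 := by omega
  have hNeq : N = j0 * d + (d - 1 - k0.val) := by rw [hk0val]; exact hNeq'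
  have hj0w : j0 < w := by
    by_contra hc
    push_neg at hc
    have : w * d ≤ j0 * d := Nat.mul_le_mul_right d hc
    omega
  -- bits of p k0, q k0 at j0
  have hbitk0 : (p k0).testBit j0 = false ∧ (q k0).testBit j0 = true := by
    have h1 := hmN.1
    have h2 := hmN.2
    rw [hNeq, hm, natShuffle_testBit' d w hd p j0 k0, decide_eq_true hj0w,
        Bool.true_and] at h1
    rw [hNeq, hm', natShuffle_testBit' d w hd q j0 k0, decide_eq_true hj0w,
        Bool.true_and] at h2
    exact ⟨h1, h2⟩
  -- key : differing coordinate bits give positions ≤ N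
  have keyI : ∀ (k : Fin d) (j : ℕ), (p k ^^^ q k).testBit j = true →
      j * d + (d - 1 - k.val) ≤ N := by
    intro k j hbit
    obtain ⟨hjw, hne⟩ := hdiffbit k j hbit
    by_contra hc
    push_neg at hc
    exact hne (hNd _ hc)
  -- xor at k0 has bit j0
  have hxk0 : (p k0 ^^^ q k0).testBit j0 = true := by
    rw [Nat.testBit_xor, hbitk0.1, hbitk0.2]
    rfl
  -- size at k0 = j0 + 1
  have hsk0 : (p k0 ^^^ q k0).size = j0 + 1 := by
    have hge : j0 + 1 ≤ (p k0 ^^^ q k0).size :=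
      Nat.lt_size.2 (Nat.ge_two_pow_of_testBit hxk0)
    have hle : (p k0 ^^^ q k0).size ≤ j0 + 1 := by
      by_contra hc
      push_neg at hc
      have hx0 : p k0 ^^^ q k0 ≠ 0 := by
        intro hz
        rw [hz, Nat.size_zero] at hc
        exact absurd hc (Nat.not_lt_zero _)
      have htop := testBit_size_sub_one hx0
      have h1 := keyI k0 _ htop
      rw [hNeq] at h1
      have h2 : ((p k0 ^^^ q k0).size - 1) * d ≤ j0 * d := by omega
      have h3 : (p k0 ^^^ q k0).size - 1 ≤ j0 := Nat.le_of_mul_le_mul_right h2 hd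
      omega
    omega
  -- all coords: size ≤ j0 + 1
  have hsle : ∀ k : Fin d, (p k ^^^ q k).size ≤ j0 + 1 := by
    intro k
    by_cases hz : p k ^^^ q k = 0
    · rw [hz, Nat.size_zero]
      omega
    · by_contra hc
      push_neg at hc
      have htop := testBit_size_sub_one hz
      have h1 := keyI k _ htop
      have h3 : N < (j0 + 1) * d := by
        rw [hNeq]
        have h4 : d - 1 - k0.val < d := by omega
        nlinarith
      have h2 : ((p k ^^^ q k).size - 1) * d < (j0 + 1) * d := by omega
      have h4 : (p k ^^^ q k).size - 1 < j0 + 1 :=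
        Nat.lt_of_mul_lt_mul_right h2
      omega
  -- strict for k < k0
  have hslt : ∀ k : Fin d, k.val < k0.val →
      (p k ^^^ q k).size < (p k0 ^^^ q k0).size := by
    intro k hk
    rw [hsk0]
    rcases Nat.lt_or_ge ((p k ^^^ q k).size) (j0 + 1) with h1 | h1
    · exact h1
    · exfalso
      have hseq : (p k ^^^ q k).size = j0 + 1 := le_antisymm (hsle k) h1
      have hz : p k ^^^ q k ≠ 0 := by
        intro hzz
        rw [hzz, Nat.size_zero] at hseq
        exact Nat.succ_ne_zero j0 hseq.symm
      have htop := testBit_size_sub_one hz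
      have h2 := keyI k _ htop
      have h3 : (p k ^^^ q k).size - 1 = j0 := by omega
      rw [h3, hNeq] at h2
      have hkd := k.isLt
      have hk0d := k0.isLt
      omega
  -- p k0 < q k0
  have hplt : p k0 < q k0 := by
    apply Nat.lt_of_testBit j0 hbitk0.1 hbitk0.2
    intro j hj
    rcases Nat.lt_or_ge j w with hjw | hjw
    · have hgt : N < j * d + (d - 1 - k0.val) := by
        rw [hNeq]
        have h5 : (j0 + 1) * d ≤ j * d := Nat.mul_le_mul_right d (by omega)
        have h6 : j0 * d + d ≤ j * d := by nlinarith
        omega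
      have h7 := hNd _ hgt
      rw [hm, hm', natShuffle_testBit' d w hd p j k0, natShuffle_testBit' d w hd q j k0,
          decide_eq_true hjw, Bool.true_and, Bool.true_and] at h7
      exact h7
    · exact hbit_ge k0 j hjw
  -- zIdx = k0
  have hzi : zIdx d p q = k0 := by
    rw [zIdx]
    exact zIdx_spec d (fun k => (p k ^^^ q k).size) k0
      (fun k => by
        show (p k ^^^ q k).size ≤ (p k0 ^^^ q k0).size
        rw [hsk0]; exact hsle k) hslt
  rw [hzi]
  exact hplt.le
end

section
/- Approximate nearest neighbor via shifted z-orders: let P be a finite set of points in [0,1)^d, let v^{(j)} = (j/(d+1),...,j/(d+1)) for j = 0,...,d, and let c = √d·(4d+4) + 1. For any query point q ∈ [0,1)^d, among the (at most) 2(d+1) points of P that are the z-order predecessor or successor of q in one of the d+1 shifted lists {σ(p + v^{(j)}) : p ∈ P}, there exists a point p* with dist(q, p*) ≤ c · min_{p ∈ P} dist(q, p). -/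
/-- The `j`-th binary digit of a real number `x ∈ [0,2)`; `j = 0` gives the
integer ("ones") bit and `j ≥ 1` the fractional bits. -/
noncomputable def rbit (x : ℝ) (j : ℕ) : ℕ := (⌊x * 2 ^ j⌋ % 2).toNat

/-- The z-order (shuffle) value of a point `p ∈ [0,2)^d`: the real number whose
binary expansion interleaves the binary digits of the coordinates of `p`, most
significant bits first, coordinate `0` first at each bit level. -/
noncomputable def zval (d : ℕ) [NeZero d] (p : EuclideanSpace ℝ (Fin d)) : ℝ :=
  ∑' m : ℕ, (rbit (p ⟨m % d, Nat.mod_lt m (NeZero.pos d)⟩) (m / d) : ℝ) / 2 ^ (m + 1)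

/-- The shift vector `v⁽ʲ⁾ = (j/(d+1), …, j/(d+1))`. -/
noncomputable def shiftv (d : ℕ) (j : ℕ) : EuclideanSpace ℝ (Fin d) :=
  WithLp.toLp 2 (fun _ => (j:ℝ) / ((d:ℝ) + 1))

lemma rbit_le_one (x : ℝ) (j : ℕ) : rbit x j ≤ 1 := by
  unfold rbit
  have := Int.emod_two_eq (⌊x * 2 ^ j⌋)
  omega

lemma floor_step (x : ℝ) (j : ℕ) :
    ⌊x * 2 ^ (j + 1)⌋ = 2 * ⌊x * 2 ^ j⌋ + (rbit x (j + 1) : ℤ) := by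
  have h1 : (2:ℝ) * ⌊x * 2 ^ j⌋ ≤ x * 2 ^ (j+1) := by
    have := Int.floor_le (x * 2 ^ j)
    have h2j : x * 2 ^ (j+1) = 2 * (x * 2 ^ j) := by ring
    rw [h2j]; push_cast; nlinarith
  have h2 : x * 2 ^ (j+1) < 2 * ⌊x * 2 ^ j⌋ + 2 := by
    have := Int.lt_floor_add_one (x * 2 ^ j)
    have h2j : x * 2 ^ (j+1) = 2 * (x * 2 ^ j) := by ring
    rw [h2j]; push_cast; nlinarith
  have hb1 : 2 * ⌊x * 2 ^ j⌋ ≤ ⌊x * 2 ^ (j+1)⌋ := by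
    exact_mod_cast Int.le_floor.2 (by exact_mod_cast h1)
  have hb2 : ⌊x * 2 ^ (j+1)⌋ < 2 * ⌊x * 2 ^ j⌋ + 2 := by
    exact_mod_cast Int.floor_lt.2 (by exact_mod_cast h2)
  unfold rbit
  have := Int.emod_two_eq (⌊x * 2 ^ (j+1)⌋)
  omega

lemma rbit_zero (x : ℝ) (hx : 0 ≤ x) (hx2 : x < 2) : (rbit x 0 : ℤ) = ⌊x⌋ := by
  unfold rbit
  have h1 : 0 ≤ ⌊x⌋ := Int.floor_nonneg.2 hx
  have h2 : ⌊x⌋ < 2 := by exact_mod_cast Int.floor_lt.2 (by norm_num [hx2])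
  simp only [pow_zero, mul_one]
  omega

lemma prefix_sum (x : ℝ) (hx : 0 ≤ x) (hx2 : x < 2) (N : ℕ) :
    (⌊x * 2 ^ N⌋ : ℝ) / 2 ^ N = ∑ j ∈ Finset.range (N + 1), (rbit x j : ℝ) / 2 ^ j := by
  induction N with
  | zero => simp [← rbit_zero x hx hx2]
  | succ N ih =>
      rw [Finset.sum_range_succ, ← ih, floor_step x N]
      push_cast
      ring

lemma coord_close (x y : ℝ) (hx : 0 ≤ x) (hx2 : x < 2) (hy : 0 ≤ y) (hy2 : y < 2)
    (N : ℕ) (h : ∀ j ≤ N, rbit x j = rbit y j) : |x - y| < 1 / 2 ^ N := by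
  have hfx : (⌊x * 2 ^ N⌋ : ℝ) / 2 ^ N = (⌊y * 2 ^ N⌋ : ℝ) / 2 ^ N := by
    rw [prefix_sum x hx hx2, prefix_sum y hy hy2]
    exact Finset.sum_congr rfl fun j hj => by
      rw [h j (Nat.lt_succ_iff.mp (Finset.mem_range.mp hj))]
  have hpos : (0:ℝ) < 2 ^ N := by positivity
  have b1 : (⌊x * 2 ^ N⌋ : ℝ) ≤ x * 2 ^ N := Int.floor_le _
  have b2 : x * 2 ^ N < ⌊x * 2 ^ N⌋ + 1 := Int.lt_floor_add_one _
  have b3 : (⌊y * 2 ^ N⌋ : ℝ) ≤ y * 2 ^ N := Int.floor_le _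
  have b4 : y * 2 ^ N < ⌊y * 2 ^ N⌋ + 1 := Int.lt_floor_add_one _
  have hf : (⌊x * 2 ^ N⌋ : ℝ) = (⌊y * 2 ^ N⌋ : ℝ) := by
    exact (div_left_inj' (by positivity)).mp hfx
  rw [abs_sub_lt_iff]
  constructor <;> rw [lt_div_iff₀ hpos] <;> nlinarith

lemma int_step_div (b r : ℤ) (k : ℕ) (hr0 : 0 ≤ r) (hr : r ≤ 1) :
    (2 * b + r) / 2 ^ (k + 1) = b / 2 ^ k := by
  have h2k : (0:ℤ) < 2 ^ k := by positivity
  have hdm := Int.mul_ediv_add_emod b (2 ^ k)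
  have h0 : 0 ≤ b % 2 ^ k := Int.emod_nonneg b (by positivity)
  have h1 : b % 2 ^ k < 2 ^ k := Int.emod_lt_of_pos b h2k
  have key : (2 * b + r) = (2 * (b % 2 ^ k) + r) + (b / 2 ^ k) * 2 ^ (k + 1) := by
    rw [pow_succ]; linarith
  rw [key, Int.add_mul_ediv_right _ _ (by positivity : (2:ℤ) ^ (k+1) ≠ 0),
    Int.ediv_eq_zero_of_lt (by linarith) (by rw [pow_succ]; linarith), zero_add]

-- floor division down the levels
lemma floor_div_pow (x : ℝ) (j k : ℕ) : ⌊x * 2 ^ j⌋ = ⌊x * 2 ^ (j + k)⌋ / 2 ^ k := by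
  induction k with
  | zero => simp
  | succ k ih =>
      have hs := floor_step x (j + k)
      have hr : rbit x (j + k + 1) ≤ 1 := rbit_le_one _ _
      have : ⌊x * 2 ^ (j + (k+1))⌋ / 2 ^ (k+1) = ⌊x * 2 ^ (j + k)⌋ / 2 ^ k := by
        have h1 : ⌊x * 2 ^ (j + (k+1))⌋ = 2 * ⌊x * 2 ^ (j+k)⌋ + (rbit x (j+k+1) : ℤ) := by
          rw [show j + (k+1) = (j+k)+1 by ring]; exact hs
        rw [h1, int_step_div _ _ _ (by positivity) (by exact_mod_cast rbit_le_one x (j+k+1))]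
      rw [this, ih]

lemma rbit_eq_of_floor_eq (x y : ℝ) (N : ℕ)
    (h : ⌊x * 2 ^ N⌋ = ⌊y * 2 ^ N⌋) : ∀ j ≤ N, rbit x j = rbit y j := by
  intro j hj
  unfold rbit
  rw [floor_div_pow x j (N - j), floor_div_pow y j (N - j),
    Nat.add_sub_cancel' hj, h]

lemma no_all_ones (x : ℝ) (hx : 0 ≤ x) (N : ℕ) : ∃ j, N ≤ j ∧ rbit x j = 0 := by
  by_contra hc
  push_neg at hc
  have hone : ∀ k, ⌊x * 2 ^ (N + k)⌋ = 2 ^ k * ⌊x * 2 ^ N⌋ + (2 ^ k - 1) := by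
    intro k
    induction k with
    | zero => simp
    | succ k ih =>
        have hs : ⌊x * 2 ^ (N + k + 1)⌋ = 2 * ⌊x * 2 ^ (N+k)⌋ + (rbit x (N+k+1) : ℤ) :=
          floor_step x (N + k)
        have h1 : rbit x (N + k + 1) = 1 := by
          have := hc (N + k + 1) (by omega)
          have := rbit_le_one x (N + k + 1)
          omega
        rw [show N + (k+1) = N + k + 1 by ring, hs, h1, ih]
        push_cast
        ring
  -- derive contradiction: x ≥ (⌊x 2^N⌋+1)/2^N
  have hub : x * 2 ^ N < ⌊x * 2 ^ N⌋ + 1 := Int.lt_floor_add_one _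
  obtain ⟨k, hk⟩ := pow_unbounded_of_one_lt (1 / ((⌊x * 2 ^ N⌋ + 1) - x * 2 ^ N)) (by norm_num : (1:ℝ) < 2)
  have hgap : (0:ℝ) < (⌊x * 2 ^ N⌋ + 1) - x * 2 ^ N := by linarith
  have hlow : (2:ℝ) ^ k * ⌊x * 2 ^ N⌋ + (2 ^ k - 1) ≤ x * 2 ^ (N + k) := by
    have := Int.floor_le (x * 2 ^ (N + k))
    rw [hone k] at this
    push_cast at this
    linarith
  have hxk : x * 2 ^ (N + k) = (x * 2 ^ N) * 2 ^ k := by ring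
  rw [hxk] at hlow
  have h2k : (0:ℝ) < 2 ^ k := by positivity
  have : 1 / ((⌊x * 2 ^ N⌋ + 1) - x * 2 ^ N) ≥ 2 ^ k := by
    rw [ge_iff_le, le_div_iff₀ hgap]
    nlinarith
  linarith

noncomputable def dig (d : ℕ) [NeZero d] (p : EuclideanSpace ℝ (Fin d)) (m : ℕ) : ℕ :=
  rbit (p ⟨m % d, Nat.mod_lt m (NeZero.pos d)⟩) (m / d)

lemma dig_le_one (d : ℕ) [NeZero d] (p : EuclideanSpace ℝ (Fin d)) (m : ℕ) :
    dig d p m ≤ 1 := rbit_le_one _ _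

lemma zval_eq (d : ℕ) [NeZero d] (p : EuclideanSpace ℝ (Fin d)) :
    zval d p = ∑' m : ℕ, (dig d p m : ℝ) / 2 ^ (m + 1) := rfl

lemma term_le (c : ℕ) (hc : c ≤ 1) (m : ℕ) : (c : ℝ) / 2 ^ (m + 1) ≤ (1/2) ^ m := by
  have h1 : (c:ℝ) ≤ 1 := by exact_mod_cast hc
  rw [div_pow, one_pow, div_le_div_iff₀ (by positivity) (by positivity)]
  have h2 : (2:ℝ) ^ m ≤ 2 ^ (m+1) := pow_le_pow_right₀ (by norm_num) (by omega)
  have h3 : (0:ℝ) < 2 ^ m := by positivity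
  nlinarith

lemma summable_dig (d : ℕ) [NeZero d] (p : EuclideanSpace ℝ (Fin d)) :
    Summable (fun m : ℕ => (dig d p m : ℝ) / 2 ^ (m + 1)) :=
  Summable.of_nonneg_of_le (fun m => by positivity)
    (fun m => term_le _ (dig_le_one d p m) m) summable_geometric_two

noncomputable def Zpre (d : ℕ) [NeZero d] (p : EuclideanSpace ℝ (Fin d)) (N : ℕ) : ℝ :=
  ∑ m ∈ Finset.range N, (dig d p m : ℝ) / 2 ^ (m + 1)

lemma zval_split (d : ℕ) [NeZero d] (p : EuclideanSpace ℝ (Fin d)) (N : ℕ) :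
    zval d p = Zpre d p N + ∑' i : ℕ, (dig d p (i + N) : ℝ) / 2 ^ (i + N + 1) := by
  rw [zval_eq]
  exact ((summable_dig d p).sum_add_tsum_nat_add N).symm

lemma tail_nonneg' (d : ℕ) [NeZero d] (p : EuclideanSpace ℝ (Fin d)) (N : ℕ) :
    0 ≤ ∑' i : ℕ, (dig d p (i + N) : ℝ) / 2 ^ (i + N + 1) :=
  tsum_nonneg fun i => by positivity

lemma geom_shift (N : ℕ) : ∑' i : ℕ, (1:ℝ) / 2 ^ (i + N + 1) = 1 / 2 ^ N := by
  have h := tsum_geometric_two' ((1:ℝ) / 2 ^ N)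
  have hc : ∀ i : ℕ, (1:ℝ) / 2 ^ N / 2 / 2 ^ i = 1 / 2 ^ (i + N + 1) := by
    intro i
    rw [pow_add, pow_add]
    field_simp
  rw [← tsum_congr hc, h]

lemma summable_geom_shift (N : ℕ) : Summable (fun i : ℕ => (1:ℝ) / 2 ^ (i + N + 1)) := by
  have hc : ∀ i : ℕ, (1:ℝ) / 2 ^ N / 2 / 2 ^ i = 1 / 2 ^ (i + N + 1) := by
    intro i; rw [pow_add, pow_add]; field_simp
  exact (summable_geometric_two' ((1:ℝ) / 2 ^ N)).congr hc

lemma summable_tail (d : ℕ) [NeZero d] (p : EuclideanSpace ℝ (Fin d)) (N : ℕ) :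
    Summable (fun i : ℕ => (dig d p (i + N) : ℝ) / 2 ^ (i + N + 1)) := by
  apply Summable.of_nonneg_of_le (fun i => by positivity) (fun i => ?_)
    (summable_geom_shift N)
  have : (dig d p (i + N) : ℝ) ≤ 1 := by exact_mod_cast dig_le_one d p (i + N)
  gcongr

lemma tail_le' (d : ℕ) [NeZero d] (p : EuclideanSpace ℝ (Fin d)) (N : ℕ) :
    ∑' i : ℕ, (dig d p (i + N) : ℝ) / 2 ^ (i + N + 1) ≤ 1 / 2 ^ N := by
  rw [← geom_shift N]
  apply Summable.tsum_le_tsum _ (summable_tail d p N) (summable_geom_shift N)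
  intro i
  have : (dig d p (i + N) : ℝ) ≤ 1 := by exact_mod_cast dig_le_one d p (i + N)
  gcongr

lemma zval_ge_Zpre (d : ℕ) [NeZero d] (p : EuclideanSpace ℝ (Fin d)) (N : ℕ) :
    Zpre d p N ≤ zval d p := by
  rw [zval_split d p N]
  linarith [tail_nonneg' d p N]

lemma geom_Ico (N M : ℕ) (h : N ≤ M) :
    ∑ m ∈ Finset.Ico N M, (1:ℝ) / 2 ^ (m + 1) = 1 / 2 ^ N - 1 / 2 ^ M := by
  induction M with
  | zero => simp_all
  | succ M ih =>
      rcases Nat.lt_or_ge N (M+1) with hlt | hge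
      · have hNM : N ≤ M := by omega
        rw [Finset.sum_Ico_succ_top hNM, ih hNM]
        have h2 : (2:ℝ) ^ (M+1) = 2 * 2 ^ M := by ring
        field_simp
        ring
      · have : N = M + 1 := by omega
        subst this
        simp

lemma zval_lt_Zpre (d : ℕ) [NeZero d] (p : EuclideanSpace ℝ (Fin d)) (N : ℕ)
    (hp : 0 ≤ p ⟨0, NeZero.pos d⟩) :
    zval d p < Zpre d p N + 1 / 2 ^ N := by
  obtain ⟨j0, hj0N, hj0⟩ := no_all_ones _ hp N
  set m0 := d * j0 with hm0
  have hd1 : 1 ≤ d := NeZero.pos d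
  have hm0N : N ≤ m0 := le_trans hj0N (Nat.le_mul_of_pos_left j0 hd1)
  have hdig0 : dig d p m0 = 0 := by
    unfold dig
    have h1 : m0 % d = 0 := by simp [hm0]
    have h2 : m0 / d = j0 := by
      rw [hm0, Nat.mul_div_cancel_left j0 hd1]
    -- rewrite the Fin index
    have : (⟨m0 % d, Nat.mod_lt m0 (NeZero.pos d)⟩ : Fin d) = ⟨0, NeZero.pos d⟩ := by
      simp [h1]
    rw [this, h2, hj0]
  -- zval = Zpre (m0+1) + tail(m0+1) ≤ Zpre(m0+1) + 1/2^(m0+1)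
  have hs1 : zval d p ≤ Zpre d p (m0 + 1) + 1 / 2 ^ (m0 + 1) := by
    rw [zval_split d p (m0 + 1)]
    linarith [tail_le' d p (m0 + 1)]
  -- Zpre(m0+1) = Zpre N + middle
  have hsplit : Zpre d p (m0 + 1) = Zpre d p N
      + ∑ m ∈ Finset.Ico N (m0 + 1), (dig d p m : ℝ) / 2 ^ (m + 1) := by
    unfold Zpre
    rw [Finset.range_eq_Ico, Finset.range_eq_Ico]
    exact (Finset.sum_Ico_consecutive (f := fun m => (dig d p m : ℝ) / 2 ^ (m + 1)) (Nat.zero_le N) (by omega : N ≤ m0 + 1)).symm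
  have hmid : ∑ m ∈ Finset.Ico N (m0 + 1), (dig d p m : ℝ) / 2 ^ (m + 1)
      ≤ 1 / 2 ^ N - 1 / 2 ^ m0 := by
    rw [Finset.sum_Ico_succ_top hm0N, hdig0]
    have hb : ∑ m ∈ Finset.Ico N m0, (dig d p m : ℝ) / 2 ^ (m + 1)
        ≤ ∑ m ∈ Finset.Ico N m0, (1:ℝ) / 2 ^ (m + 1) := by
      apply Finset.sum_le_sum
      intro m _
      have : (dig d p m : ℝ) ≤ 1 := by exact_mod_cast dig_le_one d p m
      gcongr
    rw [geom_Ico N m0 hm0N] at hb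
    simpa using hb
  have hlast : (1:ℝ) / 2 ^ (m0 + 1) < 1 / 2 ^ m0 := by
    rw [div_lt_div_iff₀ (by positivity) (by positivity), pow_succ]
    nlinarith [pow_pos (show (0:ℝ) < 2 by norm_num) m0]
  rw [hsplit] at hs1
  linarith

noncomputable def natZ (d : ℕ) [NeZero d] (p : EuclideanSpace ℝ (Fin d)) (N : ℕ) : ℕ :=
  ∑ m ∈ Finset.range N, dig d p m * 2 ^ (N - 1 - m)

lemma natZ_eq (d : ℕ) [NeZero d] (p : EuclideanSpace ℝ (Fin d)) (N : ℕ) :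
    (natZ d p N : ℝ) = Zpre d p N * 2 ^ N := by
  unfold natZ Zpre
  rw [Finset.sum_mul]
  push_cast
  apply Finset.sum_congr rfl
  intro m hm
  have hmN : m < N := Finset.mem_range.mp hm
  have hpow : (2:ℝ) ^ (N - 1 - m) * 2 ^ (m + 1) = 2 ^ N := by
    rw [← pow_add]
    congr 1
    omega
  rw [div_mul_eq_mul_div, mul_comm ((dig d p m : ℝ)) _]
  rw [show (2:ℝ) ^ N = 2 ^ (N-1-m) * 2 ^ (m+1) from hpow.symm]
  rw [mul_comm ((2:ℝ)^(N-1-m)) _, mul_div_assoc, mul_div_assoc]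
  rw [div_self (by positivity), mul_one, mul_comm]

lemma floor_zval (d : ℕ) [NeZero d] (p : EuclideanSpace ℝ (Fin d)) (N : ℕ)
    (hp : 0 ≤ p ⟨0, NeZero.pos d⟩) :
    ⌊zval d p * 2 ^ N⌋ = (natZ d p N : ℤ) := by
  have h2 : (0:ℝ) < 2 ^ N := by positivity
  have hub := zval_lt_Zpre d p N hp
  have hlb := zval_ge_Zpre d p N
  rw [Int.floor_eq_iff]
  constructor
  · push_cast
    rw [natZ_eq]
    nlinarith
  · push_cast
    rw [natZ_eq]
    have : zval d p * 2 ^ N < (Zpre d p N + 1/2^N) * 2 ^ N := by nlinarith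
    rw [add_mul] at this
    rw [div_mul_cancel₀] at this
    · linarith
    · positivity

lemma bin_unique : ∀ (N : ℕ) (a b : ℕ → ℕ), (∀ m, a m ≤ 1) → (∀ m, b m ≤ 1) →
    (∑ m ∈ Finset.range N, a m * 2 ^ m) = (∑ m ∈ Finset.range N, b m * 2 ^ m) →
    ∀ m < N, a m = b m := by
  intro N
  induction N with
  | zero => omega
  | succ N ih =>
      intro a b ha hb heq m hm
      rw [Finset.sum_range_succ'] at heq
      rw [Finset.sum_range_succ'] at heq
      have hshift : ∀ c : ℕ → ℕ, (∑ i ∈ Finset.range N, c (i+1) * 2 ^ (i+1))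
          = 2 * ∑ i ∈ Finset.range N, c (i+1) * 2 ^ i := by
        intro c
        rw [Finset.mul_sum]
        exact Finset.sum_congr rfl fun i _ => by ring
      rw [hshift a, hshift b] at heq
      simp only [pow_zero, mul_one] at heq
      have h0 : a 0 = b 0 := by
        have := ha 0; have := hb 0; omega
      have hS : (∑ i ∈ Finset.range N, a (i+1) * 2 ^ i)
          = ∑ i ∈ Finset.range N, b (i+1) * 2 ^ i := by omega
      have := ih (fun i => a (i+1)) (fun i => b (i+1)) (fun i => ha (i+1)) (fun i => hb (i+1)) hS
      match m, hm with
      | 0, _ => exact h0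
      | (k+1), hk => exact this k (by omega)

lemma dig_eq_of_floor_zval_eq (d : ℕ) [NeZero d]
    (x w : EuclideanSpace ℝ (Fin d)) (N : ℕ)
    (hx : 0 ≤ x ⟨0, NeZero.pos d⟩) (hw : 0 ≤ w ⟨0, NeZero.pos d⟩)
    (h : ⌊zval d x * 2 ^ N⌋ = ⌊zval d w * 2 ^ N⌋) :
    ∀ m < N, dig d x m = dig d w m := by
  have hnat : natZ d x N = natZ d w N := by
    have := (floor_zval d x N hx).symm.trans ((floor_zval d w N hw).symm ▸ h)
    exact_mod_cast this
  unfold natZ at hnat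
  -- reflect to increasing powers
  have key : ∀ y : EuclideanSpace ℝ (Fin d),
      (∑ m ∈ Finset.range N, dig d y (N - 1 - m) * 2 ^ m)
      = ∑ m ∈ Finset.range N, dig d y m * 2 ^ (N - 1 - m) := by
    intro y
    rw [← Finset.sum_range_reflect (fun m => dig d y m * 2 ^ (N - 1 - m)) N]
    apply Finset.sum_congr rfl
    intro j hj
    have hjN : j < N := Finset.mem_range.mp hj
    have hE : N - 1 - (N - 1 - j) = j := by omega
    rw [hE]
  have hx' : (∑ m ∈ Finset.range N, dig d x (N - 1 - m) * 2 ^ m)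
      = ∑ m ∈ Finset.range N, dig d w (N - 1 - m) * 2 ^ m := by
    rw [key, key, hnat]
  intro m hm
  have := bin_unique N (fun m => dig d x (N - 1 - m)) (fun m => dig d w (N - 1 - m))
    (fun m => dig_le_one d x _) (fun m => dig_le_one d w _) hx' (N - 1 - m) (by omega)
  have hmm : N - 1 - (N - 1 - m) = m := by omega
  simpa only [hmm] using this

lemma fract_of_bad (a b s θ : ℝ) (hab : a ≤ b) (hθ : 0 < θ)
    (hbad : ⌊(a + s) * θ⌋ ≠ ⌊(b + s) * θ⌋) :
    Int.fract ((b + s) * θ) < (b - a) * θ := by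
  have hm : ⌊(a + s) * θ⌋ ≤ ⌊(b + s) * θ⌋ :=
    Int.floor_le_floor (by nlinarith)
  have hlt : ⌊(a + s) * θ⌋ < ⌊(b + s) * θ⌋ := lt_of_le_of_ne hm hbad
  have h1 : (a + s) * θ < ⌊(a + s) * θ⌋ + 1 := Int.lt_floor_add_one _
  have h2 : ((⌊(a + s) * θ⌋ : ℝ) + 1) ≤ (⌊(b + s) * θ⌋ : ℝ) := by exact_mod_cast hlt
  have : (a + s) * θ < (⌊(b + s) * θ⌋ : ℝ) := by linarith
  rw [Int.fract]
  nlinarith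

-- two bad shifts coincide
lemma bad_unique (d : ℕ) (hd : Even d) (L : ℕ) (b β : ℝ)
    (hβ : β * ((d:ℝ) + 1) ≤ 1/2)
    (j j' : ℕ) (hj : j ≤ d) (hj' : j' ≤ d)
    (h1 : Int.fract ((b + (j:ℝ)/((d:ℝ)+1)) * 2 ^ L) < β)
    (h2 : Int.fract ((b + (j':ℝ)/((d:ℝ)+1)) * 2 ^ L) < β) : j = j' := by
  have hD0 : (0:ℝ) < (d:ℝ) + 1 := by positivity
  set u := (b + (j:ℝ)/((d:ℝ)+1)) * 2 ^ L with hu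
  set u' := (b + (j':ℝ)/((d:ℝ)+1)) * 2 ^ L with hu'
  have hdiff : (u - u') * ((d:ℝ)+1) = ((j:ℝ) - j') * 2 ^ L := by
    rw [hu, hu']
    field_simp
    ring
  set K : ℤ := ⌊u⌋ - ⌊u'⌋ with hK
  set M : ℤ := ((j:ℤ) - j') * 2 ^ L - ((d:ℤ) + 1) * K with hM
  have hMr : (M:ℝ) = ((d:ℝ)+1) * (Int.fract u - Int.fract u') := by
    rw [Int.fract, Int.fract]
    push_cast [hM, hK]
    linear_combination -hdiff
  have hf0 : 0 ≤ Int.fract u := Int.fract_nonneg u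
  have hf0' : 0 ≤ Int.fract u' := Int.fract_nonneg u'
  have hβ0 : 0 ≤ β := le_trans hf0 (le_of_lt h1)
  have hMabs : |(M:ℝ)| < 1 := by
    rw [hMr, abs_mul, abs_of_pos hD0]
    have habs : |Int.fract u - Int.fract u'| < β := by
      rw [abs_sub_lt_iff]; constructor <;> linarith
    calc ((d:ℝ)+1) * |Int.fract u - Int.fract u'| < ((d:ℝ)+1) * β := by
          apply mul_lt_mul_of_pos_left habs hD0
      _ ≤ 1/2 := by rw [mul_comm]; exact hβ
      _ < 1 := by norm_num
  have hM0 : M = 0 := by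
    have h1 : |M| < 1 := by exact_mod_cast hMabs
    exact Int.abs_lt_one_iff.mp h1
  -- (d+1) ∣ (j - j') * 2^L
  have hdvd : ((d:ℤ) + 1) ∣ ((j:ℤ) - j') * 2 ^ L := ⟨K, by omega⟩
  have hodd : Odd ((d:ℤ) + 1) := by
    obtain ⟨k, hk⟩ := hd
    exact ⟨k, by push_cast [hk]; ring⟩
  have hcop : IsCoprime ((d:ℤ) + 1) (2 ^ L) := by
    apply IsCoprime.pow_right
    have h2 : ¬ (2:ℤ) ∣ ((d:ℤ) + 1) := by
      rw [Int.two_dvd_ne_zero]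
      obtain ⟨k, hk⟩ := hodd
      omega
    exact ((Int.prime_two.coprime_iff_not_dvd).2 h2).symm
  have hdvd' : ((d:ℤ) + 1) ∣ ((j:ℤ) - j') := hcop.dvd_of_dvd_mul_right hdvd
  obtain ⟨c, hc⟩ := hdvd'
  have hd0 : (0:ℤ) ≤ (d:ℤ) := Int.ofNat_nonneg d
  have hj1 : ((j:ℤ)) ≤ d := by exact_mod_cast hj
  have hj2 : ((j':ℤ)) ≤ d := by exact_mod_cast hj'
  have hc0 : c = 0 := by
    rcases lt_trichotomy c 0 with h | h | h
    · exfalso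
      have : ((d:ℤ)+1) * c ≤ -((d:ℤ)+1) := by nlinarith
      omega
    · exact h
    · exfalso
      have : ((d:ℤ)+1) ≤ ((d:ℤ)+1) * c := by nlinarith
      omega
  rw [hc0, mul_zero] at hc
  omega

lemma exists_good_shift (d : ℕ) [NeZero d] (hd : Even d) (L : ℕ)
    (x y : EuclideanSpace ℝ (Fin d))
    (hw : ∀ i, |x i - y i| * 2 ^ L * ((d:ℝ) + 1) ≤ 1/2) :
    ∃ j ≤ d, ∀ i : Fin d,
      ⌊(x i + (j:ℝ)/((d:ℝ)+1)) * 2 ^ L⌋ = ⌊(y i + (j:ℝ)/((d:ℝ)+1)) * 2 ^ L⌋ := by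
  by_contra hcon
  push_neg at hcon
  have hbad : ∀ j : Fin (d+1), ∃ i : Fin d,
      ⌊(x i + ((j:ℕ):ℝ)/((d:ℝ)+1)) * 2 ^ L⌋ ≠ ⌊(y i + ((j:ℕ):ℝ)/((d:ℝ)+1)) * 2 ^ L⌋ := by
    intro j
    exact hcon (j:ℕ) (by omega)
  choose g hg using hbad
  have hinj : Function.Injective g := by
    intro j j' hjj
    set i := g j with hi
    have h1 := hg j
    have h2 := hg j'
    rw [← hjj] at h2
    -- set up min/max for coordinate i
    set a := min (x i) (y i) with ha
    set b := max (x i) (y i) with hb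
    have hab : a ≤ b := min_le_max
    have hθ : (0:ℝ) < 2 ^ L := by positivity
    have hswap : ∀ (s : ℝ), ⌊(x i + s) * 2 ^ L⌋ ≠ ⌊(y i + s) * 2 ^ L⌋ →
        ⌊(a + s) * 2 ^ L⌋ ≠ ⌊(b + s) * 2 ^ L⌋ := by
      intro s hs
      rcases le_total (x i) (y i) with h | h
      · rw [ha, hb, min_eq_left h, max_eq_right h]; exact hs
      · rw [ha, hb, min_eq_right h, max_eq_left h]; exact fun hh => hs hh.symm
    have hbaw : (b - a) = |x i - y i| := by
      rcases le_total (x i) (y i) with h | h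
      · rw [ha, hb, min_eq_left h, max_eq_right h, abs_of_nonpos (by linarith)]; ring
      · rw [ha, hb, min_eq_right h, max_eq_left h, abs_of_nonneg (by linarith)]
    have hβ : (b - a) * 2 ^ L * ((d:ℝ) + 1) ≤ 1/2 := by rw [hbaw]; exact hw i
    have f1 := fract_of_bad a b (((j:ℕ):ℝ)/((d:ℝ)+1)) (2 ^ L) hab hθ (hswap _ h1)
    have f2 := fract_of_bad a b (((j':ℕ):ℝ)/((d:ℝ)+1)) (2 ^ L) hab hθ (hswap _ h2)
    have := bad_unique d hd L b ((b - a) * 2 ^ L) hβ (j:ℕ) (j':ℕ) (by omega) (by omega) f1 f2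
    exact Fin.ext this
  have hcard := Fintype.card_le_of_injective g hinj
  simp [Fintype.card_fin] at hcard

lemma dig_apply (d : ℕ) [NeZero d] (p : EuclideanSpace ℝ (Fin d)) (i : Fin d) (jj : ℕ) :
    dig d p (i.val + jj * d) = rbit (p i) jj := by
  have hd : 0 < d := NeZero.pos d
  unfold dig
  have h1 : (i.val + jj * d) % d = i.val := by
    rw [Nat.add_mul_mod_self_right, Nat.mod_eq_of_lt i.isLt]
  have h2 : (i.val + jj * d) / d = jj := by
    rw [Nat.add_mul_div_right _ _ hd, Nat.div_eq_of_lt i.isLt, zero_add]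
  have h3 : (⟨(i.val + jj * d) % d, Nat.mod_lt _ hd⟩ : Fin d) = i := Fin.ext h1
  rw [h3, h2]

lemma within_cell (d : ℕ) [NeZero d] (L : ℕ)
    (X Y W : EuclideanSpace ℝ (Fin d))
    (hX : ∀ i, X i ∈ Set.Ico (0:ℝ) 2) (hY : ∀ i, Y i ∈ Set.Ico (0:ℝ) 2)
    (hW : ∀ i, W i ∈ Set.Ico (0:ℝ) 2)
    (hfl : ∀ i, ⌊X i * 2 ^ L⌋ = ⌊Y i * 2 ^ L⌋)
    (h1 : min (zval d X) (zval d Y) ≤ zval d W)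
    (h2 : zval d W ≤ max (zval d X) (zval d Y)) :
    ∀ i, |W i - X i| < 1 / 2 ^ L := by
  have hd : 0 < d := NeZero.pos d
  set N := d * (L + 1) with hN
  -- Step A: digits of X and Y agree below N
  have hA : ∀ m < N, dig d X m = dig d Y m := by
    intro m hm
    have hdiv : m / d ≤ L := by
      have hm' : m < (L + 1) * d := by rw [hN, Nat.mul_comm] at hm; exact hm
      have := (Nat.div_lt_iff_lt_mul hd).mpr hm'
      omega
    exact rbit_eq_of_floor_eq _ _ L (hfl _) _ hdiv
  -- Step B
  have hB : Zpre d X N = Zpre d Y N := by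
    unfold Zpre
    exact Finset.sum_congr rfl fun m hm => by rw [hA m (Finset.mem_range.mp hm)]
  -- Step C
  have hX0 : 0 ≤ X ⟨0, hd⟩ := (hX _).1
  have hY0 : 0 ≤ Y ⟨0, hd⟩ := (hY _).1
  have hW0 : 0 ≤ W ⟨0, hd⟩ := (hW _).1
  have hXlo := zval_ge_Zpre d X N
  have hXhi := zval_lt_Zpre d X N hX0
  have hYlo := zval_ge_Zpre d Y N
  have hYhi := zval_lt_Zpre d Y N hY0
  rw [← hB] at hYlo hYhi
  have hWlo : Zpre d X N ≤ zval d W := le_trans (le_min hXlo hYlo) h1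
  have hWhi : zval d W < Zpre d X N + 1 / 2 ^ N :=
    lt_of_le_of_lt h2 (max_lt hXhi hYhi)
  -- Step D
  have hD : ⌊zval d W * 2 ^ N⌋ = (natZ d X N : ℤ) := by
    have h2N : (0:ℝ) < 2 ^ N := by positivity
    rw [Int.floor_eq_iff]
    constructor
    · push_cast
      rw [natZ_eq]
      nlinarith
    · push_cast
      rw [natZ_eq]
      have := mul_lt_mul_of_pos_right hWhi h2N
      rw [add_mul, div_mul_cancel₀ _ (ne_of_gt h2N)] at this
      linarith
  have hDX : ⌊zval d X * 2 ^ N⌋ = ⌊zval d W * 2 ^ N⌋ := by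
    rw [hD, floor_zval d X N hX0]
  have hdig : ∀ m < N, dig d X m = dig d W m :=
    dig_eq_of_floor_zval_eq d X W N hX0 hW0 hDX
  -- Step E/F
  intro i
  have hbits : ∀ jj ≤ L, rbit (W i) jj = rbit (X i) jj := by
    intro jj hjj
    have hmN : i.val + jj * d < N := by
      have := i.isLt
      rw [hN]
      nlinarith
    have := hdig _ hmN
    rw [dig_apply, dig_apply] at this
    exact this.symm
  exact coord_close (W i) (X i) (hW i).1 (hW i).2 (hX i).1 (hX i).2 L hbits

lemma shift_apply (d : ℕ) [NeZero d] (p : EuclideanSpace ℝ (Fin d)) (j : ℕ) (i : Fin d) :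
    (p + shiftv d j) i = p i + (j:ℝ) / ((d:ℝ) + 1) := by simp [shiftv]

lemma dist_coord (d : ℕ) [NeZero d] (x y : EuclideanSpace ℝ (Fin d)) (i : Fin d) :
    |x i - y i| ≤ dist x y := by
  rw [EuclideanSpace.dist_eq]
  have h1 : dist (x i) (y i) ^ 2 ≤ ∑ k, dist (x k) (y k) ^ 2 :=
    Finset.single_le_sum (f := fun k => dist (x k) (y k) ^ 2)
      (fun k _ => by positivity) (Finset.mem_univ i)
  have := Real.sqrt_le_sqrt h1
  rw [Real.sqrt_sq dist_nonneg] at this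
  rw [← Real.dist_eq]
  exact this

lemma dist_le_of_coords (d : ℕ) [NeZero d] (x y : EuclideanSpace ℝ (Fin d)) (t : ℝ)
    (ht : 0 ≤ t) (h : ∀ i, |x i - y i| ≤ t) : dist x y ≤ Real.sqrt d * t := by
  rw [EuclideanSpace.dist_eq]
  have hsum : ∑ k, dist (x k) (y k) ^ 2 ≤ (d:ℝ) * t ^ 2 := by
    calc ∑ k, dist (x k) (y k) ^ 2 ≤ ∑ _k : Fin d, t ^ 2 := by
          apply Finset.sum_le_sum
          intro k _
          have := h k
          rw [Real.dist_eq]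
          nlinarith [abs_nonneg (x k - y k)]
      _ = (d:ℝ) * t ^ 2 := by
          rw [Finset.sum_const, Finset.card_univ, Fintype.card_fin, nsmul_eq_mul]
  calc Real.sqrt (∑ k, dist (x k) (y k) ^ 2) ≤ Real.sqrt ((d:ℝ) * t ^ 2) :=
        Real.sqrt_le_sqrt hsum
    _ = Real.sqrt d * t := by
        rw [Real.sqrt_mul (by positivity), Real.sqrt_sq ht]

lemma select (d : ℕ) [NeZero d] (P : Finset (EuclideanSpace ℝ (Fin d)))
    (q p' : EuclideanSpace ℝ (Fin d)) (hp' : p' ∈ P) (j : ℕ) :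
    ∃ pstar ∈ P,
      ((zval d (pstar + shiftv d j) ≤ zval d (q + shiftv d j) ∧
          ∀ p ∈ P, zval d (p + shiftv d j) ≤ zval d (q + shiftv d j) →
            zval d (p + shiftv d j) ≤ zval d (pstar + shiftv d j)) ∨
        (zval d (q + shiftv d j) ≤ zval d (pstar + shiftv d j) ∧
          ∀ p ∈ P, zval d (q + shiftv d j) ≤ zval d (p + shiftv d j) →
            zval d (pstar + shiftv d j) ≤ zval d (p + shiftv d j))) ∧
      min (zval d (p' + shiftv d j)) (zval d (q + shiftv d j)) ≤ zval d (pstar + shiftv d j) ∧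
      zval d (pstar + shiftv d j) ≤ max (zval d (p' + shiftv d j)) (zval d (q + shiftv d j)) := by
  set f : EuclideanSpace ℝ (Fin d) → ℝ := fun p => zval d (p + shiftv d j) with hf
  rcases le_total (f p') (f q) with hle | hge
  · set S := P.filter (fun p => f p ≤ f q) with hS
    have hSne : S.Nonempty := ⟨p', by simp [hS, hp', hle]⟩
    obtain ⟨pstar, hpsS, hmax⟩ := S.exists_max_image f hSne
    have hpsP : pstar ∈ P := (Finset.mem_filter.mp hpsS).1
    have hpsle : f pstar ≤ f q := (Finset.mem_filter.mp hpsS).2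
    refine ⟨pstar, hpsP, Or.inl ⟨hpsle, fun p hp hpq => hmax p (by simp [hS, hp, hpq, hf])⟩, ?_, ?_⟩
    · have : f p' ≤ f pstar := hmax p' (by simp [hS, hp', hle])
      exact le_trans (min_le_left _ _) this
    · exact le_trans hpsle (le_max_right _ _)
  · set S := P.filter (fun p => f q ≤ f p) with hS
    have hSne : S.Nonempty := ⟨p', by simp [hS, hp', hge]⟩
    obtain ⟨pstar, hpsS, hmin⟩ := S.exists_min_image f hSne
    have hpsP : pstar ∈ P := (Finset.mem_filter.mp hpsS).1
    have hpsge : f q ≤ f pstar := (Finset.mem_filter.mp hpsS).2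
    refine ⟨pstar, hpsP, Or.inr ⟨hpsge, fun p hp hpq => hmin p (by simp [hS, hp, hpq, hf])⟩, ?_, ?_⟩
    · exact le_trans (min_le_right _ _) hpsge
    · have : f pstar ≤ f p' := hmin p' (by simp [hS, hp', hge])
      exact le_trans this (le_max_left _ _)


/-- Approximate nearest neighbors via shifted z-orders: among the z-order
predecessors and successors of `q` in the `d+1` shifted lists there is a
`c`-approximate nearest neighbor of `q` in `P`, where `c = √d(4d+4) + 1`. -/
theorem stmt8 (d : ℕ) [NeZero d] (hd : Even d)
    (P : Finset (EuclideanSpace ℝ (Fin d))) (hP : P.Nonempty)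
    (hPr : ∀ p ∈ P, ∀ i, p i ∈ Set.Ico (0:ℝ) 1)
    (q : EuclideanSpace ℝ (Fin d)) (hq : ∀ i, q i ∈ Set.Ico (0:ℝ) 1) :
    ∃ pstar ∈ P,
      (∃ j ≤ d,
        (zval d (pstar + shiftv d j) ≤ zval d (q + shiftv d j) ∧
          ∀ p ∈ P, zval d (p + shiftv d j) ≤ zval d (q + shiftv d j) →
            zval d (p + shiftv d j) ≤ zval d (pstar + shiftv d j)) ∨
        (zval d (q + shiftv d j) ≤ zval d (pstar + shiftv d j) ∧
          ∀ p ∈ P, zval d (q + shiftv d j) ≤ zval d (p + shiftv d j) →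
            zval d (pstar + shiftv d j) ≤ zval d (p + shiftv d j))) ∧
      ∀ p ∈ P, dist q pstar ≤ (Real.sqrt d * (4 * (d:ℝ) + 4) + 1) * dist q p := by
  classical
  obtain ⟨p0, hp0P, hp0min⟩ := P.exists_min_image (fun p => dist q p) hP
  have hr0 : 0 ≤ dist q p0 := dist_nonneg
  set r := dist q p0 with hr
  have hd1 : (1:ℝ) ≤ (d:ℝ) := by exact_mod_cast NeZero.pos d
  have hsd0 : (0:ℝ) ≤ Real.sqrt d := Real.sqrt_nonneg d
  have hsd1 : (1:ℝ) ≤ Real.sqrt d := by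
    rw [show (1:ℝ) = Real.sqrt 1 by simp]
    exact Real.sqrt_le_sqrt hd1
  have hD0 : (0:ℝ) < (d:ℝ) + 1 := by positivity
  -- shifted coordinates lie in [0,2)
  have hshift_range : ∀ (p : EuclideanSpace ℝ (Fin d)), (∀ i, p i ∈ Set.Ico (0:ℝ) 1) →
      ∀ j, j ≤ d → ∀ i, (p + shiftv d j) i ∈ Set.Ico (0:ℝ) 2 := by
    intro p hp j hj i
    rw [shift_apply]
    have hs0 : 0 ≤ (j:ℝ)/((d:ℝ)+1) := by positivity
    have hs1 : (j:ℝ)/((d:ℝ)+1) < 1 := by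
      rw [div_lt_one hD0]
      have : (j:ℝ) ≤ (d:ℝ) := by exact_mod_cast hj
      linarith
    exact ⟨by linarith [(hp i).1], by linarith [(hp i).2]⟩
  by_cases hcase : r ≤ 1 / (2*((d:ℝ)+1)) ∧ 0 < r
  · obtain ⟨hrsmall, hrpos⟩ := hcase
    have hx1 : (1:ℝ) ≤ 1/(2*((d:ℝ)+1)*r) := by
      rw [le_div_iff₀ (by positivity)]
      rw [le_div_iff₀ (by positivity)] at hrsmall
      nlinarith
    obtain ⟨L, hL1, hL2⟩ := exists_nat_pow_near hx1 (one_lt_two)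
    have h2L : (0:ℝ) < 2^L := by positivity
    have hw : ∀ i, |q i - p0 i| * 2 ^ L * ((d:ℝ)+1) ≤ 1/2 := by
      intro i
      have h1 : |q i - p0 i| ≤ r := dist_coord d q p0 i
      have h2 : (2:ℝ)^L ≤ 1/(2*((d:ℝ)+1)*r) := hL1
      have h3 : r * (2:ℝ)^L ≤ r * (1/(2*((d:ℝ)+1)*r)) :=
        mul_le_mul_of_nonneg_left h2 hr0
      have h4 : r * (1/(2*((d:ℝ)+1)*r)) = 1/(2*((d:ℝ)+1)) := by
        field_simp
      rw [h4] at h3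
      have habs : 0 ≤ |q i - p0 i| := abs_nonneg _
      calc |q i - p0 i| * 2 ^ L * ((d:ℝ)+1) ≤ r * 2 ^ L * ((d:ℝ)+1) := by
            apply mul_le_mul_of_nonneg_right _ (le_of_lt hD0)
            exact mul_le_mul_of_nonneg_right h1 (le_of_lt h2L)
        _ ≤ (1/(2*((d:ℝ)+1))) * ((d:ℝ)+1) := mul_le_mul_of_nonneg_right h3 (le_of_lt hD0)
        _ = 1/2 := by
            field_simp
    obtain ⟨j, hjd, hfl⟩ := exists_good_shift d hd L q p0 hw
    obtain ⟨pstar, hpsP, hzprop, hsand1, hsand2⟩ := select d P q p0 hp0P j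
    refine ⟨pstar, hpsP, ⟨j, hjd, hzprop⟩, ?_⟩
    have hXr := hshift_range q hq j hjd
    have hYr := hshift_range p0 (hPr p0 hp0P) j hjd
    have hWr := hshift_range pstar (hPr pstar hpsP) j hjd
    have hfl' : ∀ i, ⌊(q + shiftv d j) i * 2^L⌋ = ⌊(p0 + shiftv d j) i * 2^L⌋ := by
      intro i
      rw [shift_apply, shift_apply]
      exact hfl i
    have hclose := within_cell d L (q + shiftv d j) (p0 + shiftv d j) (pstar + shiftv d j)
      hXr hYr hWr hfl' (by rw [min_comm]; exact hsand1) (by rw [max_comm]; exact hsand2)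
    have hcoord : ∀ i, |q i - pstar i| ≤ 1/2^L := by
      intro i
      have h5 := hclose i
      rw [shift_apply, shift_apply] at h5
      have heq : pstar i + (j:ℝ)/((d:ℝ)+1) - (q i + (j:ℝ)/((d:ℝ)+1)) = pstar i - q i := by ring
      rw [heq] at h5
      rw [abs_sub_comm]
      linarith
    have hdqp : dist q pstar ≤ Real.sqrt d * (1/2^L) :=
      dist_le_of_coords d q pstar (1/2^L) (by positivity) hcoord
    have hsig : (1:ℝ)/2^L < 4*((d:ℝ)+1)*r := by
      -- from hL2 : 1/(2(d+1)r) < 2^(L+1)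
      have h6 : (1:ℝ)/(2*((d:ℝ)+1)*r) < 2^(L+1) := hL2
      rw [div_lt_iff₀ (by positivity)] at h6
      rw [div_lt_iff₀ h2L]
      have h7 : (2:ℝ)^(L+1) = 2 * 2^L := by ring
      rw [h7] at h6
      nlinarith
    intro p hp
    have hrp : r ≤ dist q p := hp0min p hp
    have hstep1 : dist q pstar ≤ Real.sqrt d * (4*((d:ℝ)+1)*r) := by
      calc dist q pstar ≤ Real.sqrt d * (1/2^L) := hdqp
        _ ≤ Real.sqrt d * (4*((d:ℝ)+1)*r) :=
            mul_le_mul_of_nonneg_left (le_of_lt hsig) hsd0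
    have hstep2 : Real.sqrt d * (4*((d:ℝ)+1)*r) ≤ (Real.sqrt d * (4*(d:ℝ)+4)) * dist q p := by
      have h8 : (0:ℝ) ≤ Real.sqrt d * (4*(d:ℝ)+4) := by positivity
      calc Real.sqrt d * (4*((d:ℝ)+1)*r) = (Real.sqrt d * (4*(d:ℝ)+4)) * r := by ring
        _ ≤ (Real.sqrt d * (4*(d:ℝ)+4)) * dist q p := mul_le_mul_of_nonneg_left hrp h8
    have hstep3 : (Real.sqrt d * (4*(d:ℝ)+4)) * dist q p
        ≤ (Real.sqrt d * (4*(d:ℝ)+4) + 1) * dist q p := by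
      have : (0:ℝ) ≤ dist q p := dist_nonneg
      nlinarith
    linarith
  · rw [not_and_or] at hcase
    rcases hcase with hbig | hzero
    · -- r > 1/(2(d+1))
      push_neg at hbig
      obtain ⟨pstar, hpsP, hzprop, -, -⟩ := select d P q p0 hp0P 0
      refine ⟨pstar, hpsP, ⟨0, Nat.zero_le d, hzprop⟩, ?_⟩
      intro p hp
      have hrp : r ≤ dist q p := hp0min p hp
      have hcoord : ∀ i, |q i - pstar i| ≤ 1 := by
        intro i
        have h1 := hq i
        have h2 := hPr pstar hpsP i
        rw [abs_le]
        constructor <;> [linarith [h1.1, h2.2]; linarith [h1.2, h2.1]]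
      have hdqp : dist q pstar ≤ Real.sqrt d * 1 :=
        dist_le_of_coords d q pstar 1 (by norm_num) hcoord
      have hrbig : 1/(2*((d:ℝ)+1)) < dist q p := lt_of_lt_of_le hbig hrp
      have hkey : Real.sqrt d ≤ (Real.sqrt d * (4*(d:ℝ)+4) + 1) * dist q p := by
        have h3 : (0:ℝ) < dist q p := lt_of_le_of_lt (by positivity) hrbig
        have h4 : (Real.sqrt d * (4*(d:ℝ)+4) + 1) * dist q p
            ≥ (Real.sqrt d * (4*(d:ℝ)+4)) * (1/(2*((d:ℝ)+1))) := by
          have h5 : (0:ℝ) ≤ Real.sqrt d * (4*(d:ℝ)+4) := by positivity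
          nlinarith
        have h6 : (Real.sqrt d * (4*(d:ℝ)+4)) * (1/(2*((d:ℝ)+1))) = 2 * Real.sqrt d := by
          field_simp
          ring
        rw [h6] at h4
        linarith
      linarith [hdqp, hkey]
    · -- r = 0, hence q = p0 ∈ P
      push_neg at hzero
      have hrz : r = 0 := le_antisymm hzero hr0
      have hqp0 : q = p0 := by
        rw [hr] at hrz
        exact dist_eq_zero.mp hrz
      refine ⟨p0, hp0P, ⟨0, Nat.zero_le d, Or.inl ⟨?_, ?_⟩⟩, ?_⟩
      · rw [hqp0]
      · intro p hp hple
        rw [hqp0] at hple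
        exact hple
      · intro p hp
        rw [← hr, hrz]
        positivity
end
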